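/- Let A be a type with two binary operations | and ∗ satisfying all of axioms C3, C4, C5, C6, C7 (universally). Then for all elements w₁, w₂, h₁, h₂, u, p, q ∈ A, the following equivalence holds: (w₂ ∗ (p ∗ u)) | h₂ = (w₁ | (q | u)) ∗ h₁ if and only if (w₂ ∗ q) | h₂ = (w₁ | p) ∗ h₁. (Lemma 3.30(a), the key algebraic lemma used to prove that closed 3-braids with exponent sum zero cannot be distinguished from their mirror images by any Conway algebra invariant; here u plays the role of the common value A_{a−2,b+2} = A_{c−2,d+2}, p ∗ u the role of A_{a−2,b+1}, and q | u the role of A_{c−1,d+2}.) -/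
import Mathlib


/-- Lemma 3.30(a): in any algebra satisfying axioms C3–C7, for all
`w₁, w₂, h₁, h₂, u, p, q` one has
`(w₂ ∗ (p ∗ u)) | h₂ = (w₁ | (q | u)) ∗ h₁ ↔ (w₂ ∗ q) | h₂ = (w₁ | p) ∗ h₁`. -/
theorem conway_lemma_3_30a {A : Type*} (bar ast : A → A → A)
    (hC3 : ∀ a b c d : A, bar (bar a b) (bar c d) = bar (bar a c) (bar b d))
    (hC4 : ∀ a b c d : A, ast (bar a b) (bar c d) = bar (ast a c) (ast b d))
    (hC5 : ∀ a b c d : A, ast (ast a b) (ast c d) = ast (ast a c) (ast b d))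
    (hC6 : ∀ x y : A, ast (bar x y) y = x)
    (hC7 : ∀ x y : A, bar (ast x y) y = x)
    (w₁ w₂ h₁ h₂ u p q : A) :
    bar (ast w₂ (ast p u)) h₂ = ast (bar w₁ (bar q u)) h₁ ↔
      bar (ast w₂ q) h₂ = ast (bar w₁ p) h₁ := by
  -- C4 read backwards
  have hC4' : ∀ a b c d : A, bar (ast a b) (ast c d) = ast (bar a c) (bar b d) :=
    fun a b c d => (hC4 a c b d).symm
  -- solving `bar X y = R` for `X`
  have solve_bar : ∀ X R y : A, bar X y = R ↔ X = ast R y := by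
    intro X R y
    constructor
    · intro h; rw [← h, hC6]
    · intro h; rw [h, hC7]
  -- solving `ast w P = Z` for `w`
  have solve_ast : ∀ w P Z : A, ast w P = Z ↔ w = bar Z P := by
    intro w P Z
    constructor
    · intro h; rw [← h, hC7]
    · intro h; rw [h, hC6]
  -- the key identity (★)
  have key : bar (ast (ast (bar w₁ (bar q u)) h₁) h₂) (ast p u)
      = bar (ast (ast (bar w₁ p) h₁) h₂) q := by
    calc bar (ast (ast (bar w₁ (bar q u)) h₁) h₂) (ast p u)
        = ast (bar (ast (bar w₁ (bar q u)) h₁) p) (bar h₂ u) := hC4' _ _ _ _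
      _ = ast (bar (ast (bar w₁ (bar q u)) h₁) (ast (bar p h₁) h₁)) (bar h₂ u) := by
          rw [hC6]
      _ = ast (ast (bar (bar w₁ (bar q u)) (bar p h₁)) (bar h₁ h₁)) (bar h₂ u) := by
          rw [hC4']
      _ = ast (ast (bar (bar w₁ p) (bar (bar q u) h₁)) (bar h₁ h₁)) (bar h₂ u) := by
          rw [hC3]
      _ = ast (bar (ast (bar w₁ p) h₁) (ast (bar (bar q u) h₁) h₁)) (bar h₂ u) := by
          rw [hC4]
      _ = ast (bar (ast (bar w₁ p) h₁) (bar q u)) (bar h₂ u) := by rw [hC6]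
      _ = bar (ast (ast (bar w₁ p) h₁) h₂) (ast (bar q u) u) := (hC4' _ _ _ _).symm
      _ = bar (ast (ast (bar w₁ p) h₁) h₂) q := by rw [hC6]
  rw [solve_bar, solve_ast, solve_bar, solve_ast, key]
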